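/- arXiv:2210.14247 — 2 statements merged into one kernel-verified Lean document; each statement's English description precedes it below -/
import Mathlib

section
/- For all A, B, C ∈ evZ: (i) rows(A ⊘ B) = rows(A) + rows(B); (ii) cols(A ⊘ B) = cols(A) + cols(B); (iii) (A ⊘ B) ⊘ C = A ⊘ (B ⊘ C); (iv) ς(A ⊘ B) = ς(A) ⊠ ς(B). -/
open scoped Classical

namespace TwoParam

/-! ### The free commutative monoid on `d` generators, written additively -/

abbrev Md (d : ℕ) := Fin d →₀ ℕ

/-! ### Raw matrices over `Md d` and matrix compositions

A raw matrix is a function `ℕ → ℕ → Md d` together with a number of rows and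
columns, normalized to be `0` (= the neutral element `ε`) outside the range.
The empty composition is the `0 × 0` matrix. -/

structure RawMat (d : ℕ) where
  rows : ℕ
  cols : ℕ
  entry : ℕ → ℕ → Md d
  entry_eq_zero : ∀ i j : ℕ, rows ≤ i ∨ cols ≤ j → entry i j = 0

namespace RawMat

variable {d : ℕ}

/-- A matrix composition: no row and no column consists entirely of `ε`.
(The empty `0 × 0` matrix vacuously satisfies this.) -/
def IsComp (a : RawMat d) : Prop :=
  (∀ i < a.rows, ∃ j < a.cols, a.entry i j ≠ 0) ∧
  (∀ j < a.cols, ∃ i < a.rows, a.entry i j ≠ 0)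

/-- The empty composition. -/
def empty (d : ℕ) : RawMat d := ⟨0, 0, fun _ _ => 0, fun _ _ _ => rfl⟩

/-- Diagonal block concatenation of two matrices. -/
def diag (a b : RawMat d) : RawMat d where
  rows := a.rows + b.rows
  cols := a.cols + b.cols
  entry := fun i j =>
    if i < a.rows ∧ j < a.cols then a.entry i j
    else if a.rows ≤ i ∧ a.cols ≤ j then b.entry (i - a.rows) (j - a.cols)
    else 0
  entry_eq_zero := by
    intro i j h
    split_ifs with h1 h2
    · exact absurd h (by omega)
    · exact b.entry_eq_zero _ _ (by omega)
    · rfl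

/-- A non-empty composition is connected if it admits no nontrivial
block-diagonal decomposition into compositions. -/
def Connected (a : RawMat d) : Prop :=
  a.IsComp ∧ a ≠ empty d ∧
    ∀ b c : RawMat d, b.IsComp → c.IsComp → a = b.diag c →
      b = empty d ∨ c = empty d

/-- Total weight of a matrix: the homomorphism `Md d → ℕ` sending every
generator to `1`, summed over all entries. -/
def weight (a : RawMat d) : ℕ :=
  ∑ i ∈ Finset.range a.rows, ∑ j ∈ Finset.range a.cols,
    (a.entry i j).sum fun _ e => e

end RawMat

/-! ### Evaluation of monomials -/

/-- For `z ∈ R^d` and `m ∈ Md d`, the evaluation `z^(m) = ∏ j, z j ^ m j`. -/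
def evalMon {d : ℕ} {R : Type*} [CommRing R] (z : Fin d → R) (m : Md d) : R :=
  m.prod fun j e => z j ^ e

/-! ### Two-parameter sums signature -/

/-- Strictly increasing chains of length `m` with values in `[lo, hi)`
(0-based indexing of the data). -/
noncomputable def chainsB (m lo hi : ℕ) : Finset (Fin m → ℕ) :=
  (Fintype.piFinset fun _ : Fin m => Finset.Ico lo hi).filter StrictMono

/-- The bounded two-parameter sums signature coefficient `⟨SS_{l;r}(Z), a⟩`. -/
noncomputable def SSb {d : ℕ} {R : Type*} [CommRing R]
    (Z : ℕ × ℕ → Fin d → R) (l r : ℕ × ℕ) (a : RawMat d) : R :=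
  ∑ ι ∈ chainsB a.rows l.1 r.1, ∑ κ ∈ chainsB a.cols l.2 r.2,
    ∏ s : Fin a.rows, ∏ t : Fin a.cols, evalMon (Z (ι s, κ t)) (a.entry s t)

/-- The (unbounded) two-parameter sums signature coefficient `⟨SS(Z), a⟩`,
for finitely supported `Z` a finite sum. -/
noncomputable def SSc {d : ℕ} {R : Type*} [CommRing R]
    (Z : ℕ × ℕ → Fin d → R) (a : RawMat d) : R :=
  ∑ᶠ ι ∈ {f : Fin a.rows → ℕ | StrictMono f},
    ∑ᶠ κ ∈ {g : Fin a.cols → ℕ | StrictMono g},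
      ∏ s : Fin a.rows, ∏ t : Fin a.cols, evalMon (Z (ι s, κ t)) (a.entry s t)

/-! ### Quasi-shuffle surjections -/

/-- `qShSet m s j`: surjections `{1,…,m+s} ↠ {1,…,j}` that are strictly
increasing on the first `m` and on the last `s` arguments. -/
noncomputable def qShSet (m s j : ℕ) : Finset (Fin (m + s) → Fin j) :=
  Finset.univ.filter fun q =>
    Function.Surjective q ∧
    (∀ u v : Fin (m + s), u < v → (v : ℕ) < m → q u < q v) ∧
    (∀ u v : Fin (m + s), u < v → m ≤ (u : ℕ) → q u < q v)

/-- The summand `c^{p,q}` of the two-parameter quasi-shuffle: the `j × k`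
matrix with entries `⋆_{u ∈ p⁻¹(x), v ∈ q⁻¹(y)} diag(a,b)_{u,v}`. -/
noncomputable def qshMat {d : ℕ} (a b : RawMat d) {j k : ℕ}
    (p : Fin (a.rows + b.rows) → Fin j) (q : Fin (a.cols + b.cols) → Fin k) :
    RawMat d where
  rows := j
  cols := k
  entry := fun x y =>
    if hx : x < j then
      if hy : y < k then
        ∑ u ∈ Finset.univ.filter (fun u => p u = ⟨x, hx⟩),
          ∑ v ∈ Finset.univ.filter (fun v => q v = ⟨y, hy⟩),
            (a.diag b).entry u v
      else 0
    else 0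
  entry_eq_zero := by
    intro x y h
    split_ifs with hx hy
    · exact absurd h (by omega)
    · rfl
    · rfl

/-- The two-parameter quasi-shuffle `a ⧢ b`, as an element of the free
`R`-module on matrices.  (The empty index sets for `j` or `k` outside
`[0, rows+rows]` resp. `[0, cols+cols]` implement the conventions
`e ⧢ a = a ⧢ e = a` and `e ⧢ e = e`.) -/
noncomputable def qsh {d : ℕ} (R : Type*) [CommRing R] (a b : RawMat d) :
    RawMat d →₀ R :=
  ∑ j ∈ Finset.range (a.rows + b.rows + 1),
    ∑ k ∈ Finset.range (a.cols + b.cols + 1),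
      ∑ p ∈ qShSet a.rows b.rows j,
        ∑ q ∈ qShSet a.cols b.cols k,
          Finsupp.single (qshMat a b p q) 1

/-- Bilinear extension of the quasi-shuffle to the free module. -/
noncomputable def qshL {d : ℕ} {R : Type*} [CommRing R]
    (F G : RawMat d →₀ R) : RawMat d →₀ R :=
  F.sum fun a ra => G.sum fun b rb => (ra * rb) • qsh R a b

/-! ### Two-parameter data: eventually zero / eventually constant functions -/

variable {V : Type*}

/-- Eventually zero two-parameter data: finite support. -/
def EvZ [Zero V] (X : ℕ × ℕ → V) : Prop := (Function.support X).Finite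

/-- Eventually constant two-parameter data: there is a box outside of which
`X` is constant; i.e. whenever two values differ, one of the two indices lies
in the box. -/
def EvC (X : ℕ × ℕ → V) : Prop :=
  ∃ n : ℕ × ℕ, ∀ i j : ℕ × ℕ, X i ≠ X j →
    (i.1 ≤ n.1 ∧ i.2 ≤ n.2) ∨ (j.1 ≤ n.1 ∧ j.2 ≤ n.2)

/-- The coordinate of `i` along the axis `a` (axis `0` = rows, `1` = cols). -/
def axC (a : Fin 2) (i : ℕ × ℕ) : ℕ := if a = 0 then i.1 else i.2

/-- Shift an index one step down along the axis `a`. -/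
def shiftD (a : Fin 2) (i : ℕ × ℕ) : ℕ × ℕ :=
  if a = 0 then (i.1 - 1, i.2) else (i.1, i.2 - 1)

/-- The zero insertion operator (0-based position `k`): insert a zero
row/column at position `k` along axis `a`. -/
def zeroIns [Zero V] (a : Fin 2) (k : ℕ) (X : ℕ × ℕ → V) : ℕ × ℕ → V :=
  fun i => if axC a i < k then X i else if axC a i = k then 0 else X (shiftD a i)

/-- The warping operator (0-based position `k`): duplicate the row/column at
position `k` along axis `a`. -/
def warp (a : Fin 2) (k : ℕ) (X : ℕ × ℕ → V) : ℕ × ℕ → V :=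
  fun i => if axC a i ≤ k then X i else X (shiftD a i)

/-- The two-parameter (forward) difference operator `δ`. -/
def diffOp [AddCommGroup V] (X : ℕ × ℕ → V) : ℕ × ℕ → V := fun i =>
  X (i.1 + 1, i.2 + 1) - X (i.1 + 1, i.2) - X (i.1, i.2 + 1) + X (i.1, i.2)

/-- The summation operator `ς`, a right inverse of `δ`:
`(ς Z)_{i,j} = Σ_{s ≥ i} Σ_{t ≥ j} Z_{s,t}`. -/
noncomputable def sigmaOp [AddCommMonoid V] (Z : ℕ × ℕ → V) : ℕ × ℕ → V :=
  fun i => ∑ᶠ p ∈ {p : ℕ × ℕ | i.1 ≤ p.1 ∧ i.2 ≤ p.2}, Z p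

/-- The set of all `n ∈ ℕ²` such that `X` is determined inside the
`n.1 × n.2` upper-left box (0-based size/count convention). -/
def sizeSetC (X : ℕ × ℕ → V) : Set (ℕ × ℕ) :=
  {n | ∀ i j : ℕ × ℕ, X i ≠ X j →
    (i.1 < n.1 ∧ i.2 < n.2) ∨ (j.1 < n.1 ∧ j.2 < n.2)}

/-- `rows(X)` for eventually constant `X`: first component of the least
element of `sizeSetC X`. -/
noncomputable def rowsC (X : ℕ × ℕ → V) : ℕ := sInf (Prod.fst '' sizeSetC X)

/-- `cols(X)` for eventually constant `X`. -/
noncomputable def colsC (X : ℕ × ℕ → V) : ℕ := sInf (Prod.snd '' sizeSetC X)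

/-- `rows(Z)` for eventually zero `Z`, defined via the support. -/
noncomputable def rowsZ [Zero V] (Z : ℕ × ℕ → V) : ℕ :=
  sInf {m : ℕ | ∀ i : ℕ × ℕ, Z i ≠ 0 → i.1 < m}

/-- `cols(Z)` for eventually zero `Z`, defined via the support. -/
noncomputable def colsZ [Zero V] (Z : ℕ × ℕ → V) : ℕ :=
  sInf {m : ℕ | ∀ i : ℕ × ℕ, Z i ≠ 0 → i.2 < m}

/-- Diagonal concatenation `A ⊘ B` on eventually zero functions,
with `rows`/`cols` taken in the eventually-constant sense. -/
noncomputable def dconc [AddCommGroup V] (A B : ℕ × ℕ → V) : ℕ × ℕ → V :=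
  A + (zeroIns 0 0)^[rowsC A] ((zeroIns 1 0)^[colsC A] B)

/-- Diagonal concatenation `A ⊘ B` on eventually zero functions,
with `rows`/`cols` taken in the support sense. -/
noncomputable def dconcZ [AddCommGroup V] (A B : ℕ × ℕ → V) : ℕ × ℕ → V :=
  A + (zeroIns 0 0)^[rowsZ A] ((zeroIns 1 0)^[colsZ A] B)

/-- Concatenation along the diagonal `X ⊠ Y` on eventually constant
functions: `ς(δX) + Warp_{1,1}^{rows X}(Warp_{2,1}^{cols X}(Y))`. -/
noncomputable def bconc [AddCommGroup V] (X Y : ℕ × ℕ → V) : ℕ × ℕ → V :=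
  sigmaOp (diffOp X) + (warp 0 0)^[rowsC X] ((warp 1 0)^[colsC X] Y)


/-! ### Two-parameter quasisymmetric functions -/

/-- Monomials in the commuting variables `x_{i,j}`, `(i,j) ∈ ℕ × ℕ`. -/
abbrev Mon := (ℕ × ℕ) →₀ ℕ

/-- Total degree of a monomial. -/
def mdeg (m : Mon) : ℕ := m.sum fun _ e => e

/-- A formal power series (given by its coefficient function) has finite
total degree. -/
def FinDeg {R : Type*} [Zero R] (f : Mon → R) : Prop :=
  ∃ D : ℕ, ∀ m : Mon, f m ≠ 0 → mdeg m ≤ D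

/-- `ℕ₀`-valued raw matrices, normalized to vanish outside the range. -/
structure NMat where
  rows : ℕ
  cols : ℕ
  entry : ℕ → ℕ → ℕ
  entry_eq_zero : ∀ i j : ℕ, rows ≤ i ∨ cols ≤ j → entry i j = 0

namespace NMat

/-- An `ℕ₀`-matrix composition: no zero row and no zero column. -/
def IsComp (a : NMat) : Prop :=
  (∀ i < a.rows, ∃ j < a.cols, a.entry i j ≠ 0) ∧
  (∀ j < a.cols, ∃ i < a.rows, a.entry i j ≠ 0)

/-- The empty composition. -/
def empty : NMat := ⟨0, 0, fun _ _ => 0, fun _ _ _ => rfl⟩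

/-- Diagonal block concatenation. -/
def diag (a b : NMat) : NMat where
  rows := a.rows + b.rows
  cols := a.cols + b.cols
  entry := fun i j =>
    if i < a.rows ∧ j < a.cols then a.entry i j
    else if a.rows ≤ i ∧ a.cols ≤ j then b.entry (i - a.rows) (j - a.cols)
    else 0
  entry_eq_zero := by
    intro i j h
    split_ifs with h1 h2
    · exact absurd h (by omega)
    · exact b.entry_eq_zero _ _ (by omega)
    · rfl

end NMat

/-- The monomial `∏_{s,t} x_{ι_s, κ_t}^{a_{s,t}}` attached to a matrix `a`
and chains `ι`, `κ`. -/
noncomputable def monomialOf (a : NMat) (ι : Fin a.rows → ℕ) (κ : Fin a.cols → ℕ) : Mon :=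
  ∑ s : Fin a.rows, ∑ t : Fin a.cols, Finsupp.single (ι s, κ t) (a.entry s t)

/-- The monomial quasisymmetric function `M_a` (as a coefficient function):
each monomial `∏ x_{ι_s,κ_t}^{a_{s,t}}` for strictly increasing chains occurs
with coefficient `1`.  In particular `M_e = 1`. -/
noncomputable def monQ {R : Type*} [CommRing R] (a : NMat) : Mon → R := fun m =>
  if ∃ (ι : Fin a.rows → ℕ) (κ : Fin a.cols → ℕ),
      StrictMono ι ∧ StrictMono κ ∧ m = monomialOf a ι κ
  then 1 else 0

/-- Two-parameter quasisymmetric function: finite degree, and for every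
matrix composition `a` and all strictly increasing chains `ι`, `κ`, the
coefficients of `∏ x_{ι_s,κ_t}^{a_{s,t}}` and of `∏ x_{s,t}^{a_{s,t}}`
coincide. -/
def IsQSym {R : Type*} [CommRing R] (f : Mon → R) : Prop :=
  FinDeg f ∧ ∀ a : NMat, a.IsComp →
    ∀ (ι : Fin a.rows → ℕ) (κ : Fin a.cols → ℕ), StrictMono ι → StrictMono κ →
      f (monomialOf a ι κ) =
        f (monomialOf a (fun s => (s : ℕ)) (fun t => (t : ℕ)))

/-- Product of formal power series (Cauchy product of coefficient
functions). -/
noncomputable def mulF {R : Type*} [CommRing R] (f g : Mon → R) : Mon → R :=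
  fun m => ∑ p ∈ Finset.HasAntidiagonal.antidiagonal m, f p.1 * g p.2

/-- Two-parameter quasisymmetric functions form an `R`-submodule of the
module of coefficient functions. -/
noncomputable def QSymSub (R : Type*) [CommRing R] : Submodule R (Mon → R) where
  carrier := {f | IsQSym f}
  add_mem' := by
    rintro f g ⟨⟨Df, hDf⟩, hf⟩ ⟨⟨Dg, hDg⟩, hg⟩
    refine ⟨⟨max Df Dg, ?_⟩, ?_⟩
    · intro m hm
      by_contra hc
      push_neg at hc
      have h1 : f m = 0 := by
        by_contra h
        have := hDf m h
        omega
      have h2 : g m = 0 := by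
        by_contra h
        have := hDg m h
        omega
      apply hm
      show f m + g m = 0
      rw [h1, h2, add_zero]
    · intro a ha ι κ hι hκ
      show f _ + g _ = f _ + g _
      rw [hf a ha ι κ hι hκ, hg a ha ι κ hι hκ]
  zero_mem' := ⟨⟨0, fun _ hm => absurd rfl hm⟩, fun _ _ _ _ _ _ => rfl⟩
  smul_mem' := by
    rintro c f ⟨⟨Df, hDf⟩, hf⟩
    refine ⟨⟨Df, ?_⟩, ?_⟩
    · intro m hm
      apply hDf
      intro h
      apply hm
      show c • f m = 0
      rw [h, smul_zero]
    · intro a ha ι κ hι hκ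
      show c • f _ = c • f _
      rw [hf a ha ι κ hι hκ]

/-- Index shift used by the free analogue of zero insertion: indices with
coordinate `≥ k` along axis `a` are shifted up by one (axis `0` = rows). -/
def liftIdx (a : Fin 2) (k : ℕ) (i : ℕ × ℕ) : ℕ × ℕ :=
  if a = 0 then (if i.1 < k then i else (i.1 + 1, i.2))
  else (if i.2 < k then i else (i.1, i.2 + 1))

/-- The free analogue of zero insertion on formal power series: the algebra
endomorphism sending `x_i ↦ x_i` for `i_a < k`, `x_i ↦ 0` for `i_a = k` and
`x_i ↦ x_{i - e_a}` for `i_a > k` (0-based position `k`).  On coefficient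
functions it is given by precomposition with the index lift. -/
noncomputable def zeroF {R : Type*} [CommRing R] (a : Fin 2) (k : ℕ)
    (f : Mon → R) : Mon → R :=
  fun m => f (m.mapDomain (liftIdx a k))

/-- The quasi-shuffle summand `c^{p,q}` for `ℕ₀`-matrices. -/
noncomputable def nQshMat (a b : NMat) {j k : ℕ}
    (p : Fin (a.rows + b.rows) → Fin j) (q : Fin (a.cols + b.cols) → Fin k) :
    NMat where
  rows := j
  cols := k
  entry := fun x y =>
    if hx : x < j then
      if hy : y < k then
        ∑ u ∈ Finset.univ.filter (fun u => p u = ⟨x, hx⟩),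
          ∑ v ∈ Finset.univ.filter (fun v => q v = ⟨y, hy⟩),
            (a.diag b).entry u v
      else 0
    else 0
  entry_eq_zero := by
    intro x y h
    split_ifs with hx hy
    · exact absurd h (by omega)
    · rfl
    · rfl

/-- One-dimensional two-parameter sums signature coefficient `⟨SS(Z), a⟩`. -/
noncomputable def SScN {K : Type*} [CommRing K] (Z : ℕ × ℕ → K) (a : NMat) : K :=
  ∑ᶠ ι ∈ {f : Fin a.rows → ℕ | StrictMono f},
    ∑ᶠ κ ∈ {g : Fin a.cols → ℕ | StrictMono g},
      ∏ s : Fin a.rows, ∏ t : Fin a.cols, Z (ι s, κ t) ^ a.entry s t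

/-- Evaluation of a formal power series at finitely supported data. -/
noncomputable def evalSeries {K : Type*} [CommRing K] (f : Mon → K)
    (Z : ℕ × ℕ → K) : K :=
  ∑ᶠ m : Mon, f m * m.prod fun i e => Z i ^ e

/-! ### Auxiliary lemmas for statement 13 -/

section Aux13

variable {V : Type*} [AddCommGroup V]

/-- Explicit shift of a two-parameter function by `(r, c)`. -/
noncomputable def shiftRC (r c : ℕ) (X : ℕ × ℕ → V) : ℕ × ℕ → V :=
  fun i => if r ≤ i.1 ∧ c ≤ i.2 then X (i.1 - r, i.2 - c) else 0

lemma congrX (X : ℕ × ℕ → V) {a b c d : ℕ} (h1 : a = c) (h2 : b = d) :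
    X (a, b) = X (c, d) := by rw [h1, h2]

lemma axC0 (i : ℕ × ℕ) : axC (0 : Fin 2) i = i.1 := by simp [axC]

lemma axC1 (i : ℕ × ℕ) : axC (1 : Fin 2) i = i.2 := by
  rw [axC, if_neg (by decide)]

lemma shiftD0 (i : ℕ × ℕ) : shiftD (0 : Fin 2) i = (i.1 - 1, i.2) := by simp [shiftD]

lemma shiftD1 (i : ℕ × ℕ) : shiftD (1 : Fin 2) i = (i.1, i.2 - 1) := by
  rw [shiftD, if_neg (by decide)]

lemma zeroIns0_apply (X : ℕ × ℕ → V) (i : ℕ × ℕ) :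
    zeroIns (0 : Fin 2) 0 X i = if i.1 = 0 then 0 else X (i.1 - 1, i.2) := by
  rw [zeroIns, axC0, shiftD0, if_neg (Nat.not_lt_zero _)]

lemma zeroIns1_apply (X : ℕ × ℕ → V) (i : ℕ × ℕ) :
    zeroIns (1 : Fin 2) 0 X i = if i.2 = 0 then 0 else X (i.1, i.2 - 1) := by
  rw [zeroIns, axC1, shiftD1, if_neg (Nat.not_lt_zero _)]

lemma warp0_apply (X : ℕ × ℕ → V) (i : ℕ × ℕ) :
    warp (0 : Fin 2) 0 X i = X (i.1 - 1, i.2) := by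
  rw [warp, axC0, shiftD0]
  split_ifs with h
  · nth_rewrite 1 [show i = (i.1 - 1, i.2) from Prod.ext_iff.mpr ⟨by omega, rfl⟩]
    rfl
  · rfl

lemma warp1_apply (X : ℕ × ℕ → V) (i : ℕ × ℕ) :
    warp (1 : Fin 2) 0 X i = X (i.1, i.2 - 1) := by
  rw [warp, axC1, shiftD1]
  split_ifs with h
  · nth_rewrite 1 [show i = (i.1, i.2 - 1) from Prod.ext_iff.mpr ⟨rfl, by omega⟩]
    rfl
  · rfl

lemma zeroIns0_iterate (r : ℕ) (X : ℕ × ℕ → V) (i : ℕ × ℕ) :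
    (zeroIns (0 : Fin 2) 0)^[r] X i = if r ≤ i.1 then X (i.1 - r, i.2) else 0 := by
  induction r generalizing X i with
  | zero => simp
  | succ r ih =>
    rw [Function.iterate_succ_apply, ih]
    by_cases h : r + 1 ≤ i.1
    · rw [if_pos (by omega : r ≤ i.1), if_pos h, zeroIns0_apply,
        if_neg (by simp only; omega)]
      exact congrX X (by simp only; omega) rfl
    · by_cases h2 : r ≤ i.1
      · rw [if_pos h2, if_neg h, zeroIns0_apply, if_pos (by simp only; omega)]
      · rw [if_neg h2, if_neg h]

lemma zeroIns1_iterate (c : ℕ) (X : ℕ × ℕ → V) (i : ℕ × ℕ) :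
    (zeroIns (1 : Fin 2) 0)^[c] X i = if c ≤ i.2 then X (i.1, i.2 - c) else 0 := by
  induction c generalizing X i with
  | zero => simp
  | succ c ih =>
    rw [Function.iterate_succ_apply, ih]
    by_cases h : c + 1 ≤ i.2
    · rw [if_pos (by omega : c ≤ i.2), if_pos h, zeroIns1_apply,
        if_neg (by simp only; omega)]
      exact congrX X rfl (by simp only; omega)
    · by_cases h2 : c ≤ i.2
      · rw [if_pos h2, if_neg h, zeroIns1_apply, if_pos (by simp only; omega)]
      · rw [if_neg h2, if_neg h]

lemma warp0_iterate (r : ℕ) (X : ℕ × ℕ → V) (i : ℕ × ℕ) :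
    (warp (0 : Fin 2) 0)^[r] X i = X (i.1 - r, i.2) := by
  induction r generalizing X i with
  | zero => simp
  | succ r ih =>
    rw [Function.iterate_succ_apply, ih, warp0_apply]
    exact congrX X (by simp only; omega) rfl

lemma warp1_iterate (c : ℕ) (X : ℕ × ℕ → V) (i : ℕ × ℕ) :
    (warp (1 : Fin 2) 0)^[c] X i = X (i.1, i.2 - c) := by
  induction c generalizing X i with
  | zero => simp
  | succ c ih =>
    rw [Function.iterate_succ_apply, ih, warp1_apply]
    exact congrX X rfl (by simp only; omega)

lemma evz_bound {Z : ℕ × ℕ → V} (hZ : EvZ Z) :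
    ∃ N : ℕ, ∀ i : ℕ × ℕ, Z i ≠ 0 → i.1 < N ∧ i.2 < N := by
  refine ⟨(hZ.toFinset.sup fun i => max i.1 i.2) + 1, fun i hi => ?_⟩
  have hmem : i ∈ hZ.toFinset := hZ.mem_toFinset.mpr hi
  have h1 : max i.1 i.2 ≤ hZ.toFinset.sup fun i => max i.1 i.2 :=
    Finset.le_sup (f := fun i : ℕ × ℕ => max i.1 i.2) hmem
  omega

lemma rowsZ_spec {Z : ℕ × ℕ → V} (hZ : EvZ Z) {i : ℕ × ℕ} (hi : Z i ≠ 0) :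
    i.1 < rowsZ Z := by
  obtain ⟨N, hN⟩ := evz_bound hZ
  have hne : ({m : ℕ | ∀ i : ℕ × ℕ, Z i ≠ 0 → i.1 < m}).Nonempty :=
    ⟨N, fun i hi => (hN i hi).1⟩
  exact Nat.sInf_mem hne i hi

lemma colsZ_spec {Z : ℕ × ℕ → V} (hZ : EvZ Z) {i : ℕ × ℕ} (hi : Z i ≠ 0) :
    i.2 < colsZ Z := by
  obtain ⟨N, hN⟩ := evz_bound hZ
  have hne : ({m : ℕ | ∀ i : ℕ × ℕ, Z i ≠ 0 → i.2 < m}).Nonempty :=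
    ⟨N, fun i hi => (hN i hi).2⟩
  exact Nat.sInf_mem hne i hi

lemma rowsZ_le {Z : ℕ × ℕ → V} {m : ℕ} (h : ∀ i : ℕ × ℕ, Z i ≠ 0 → i.1 < m) :
    rowsZ Z ≤ m := Nat.sInf_le h

lemma colsZ_le {Z : ℕ × ℕ → V} {m : ℕ} (h : ∀ i : ℕ × ℕ, Z i ≠ 0 → i.2 < m) :
    colsZ Z ≤ m := Nat.sInf_le h

lemma rowsZ_witness {Z : ℕ × ℕ → V} (hZ : EvZ Z) (h : 0 < rowsZ Z) :
    ∃ i : ℕ × ℕ, Z i ≠ 0 ∧ i.1 + 1 = rowsZ Z := by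
  have hnm : rowsZ Z - 1 ∉ {m : ℕ | ∀ i : ℕ × ℕ, Z i ≠ 0 → i.1 < m} :=
    Nat.notMem_of_lt_sInf (show rowsZ Z - 1 < rowsZ Z by omega)
  simp only [Set.mem_setOf_eq, not_forall] at hnm
  obtain ⟨i, hi, hlt⟩ := hnm
  exact ⟨i, hi, by have := rowsZ_spec hZ hi; omega⟩

lemma colsZ_witness {Z : ℕ × ℕ → V} (hZ : EvZ Z) (h : 0 < colsZ Z) :
    ∃ i : ℕ × ℕ, Z i ≠ 0 ∧ i.2 + 1 = colsZ Z := by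
  have hnm : colsZ Z - 1 ∉ {m : ℕ | ∀ i : ℕ × ℕ, Z i ≠ 0 → i.2 < m} :=
    Nat.notMem_of_lt_sInf (show colsZ Z - 1 < colsZ Z by omega)
  simp only [Set.mem_setOf_eq, not_forall] at hnm
  obtain ⟨i, hi, hlt⟩ := hnm
  exact ⟨i, hi, by have := colsZ_spec hZ hi; omega⟩

lemma rowsC_eq_rowsZ {Z : ℕ × ℕ → V} (hZ : EvZ Z) : rowsC Z = rowsZ Z := by
  obtain ⟨N, hN⟩ := evz_bound hZ
  have himg : Prod.fst '' sizeSetC Z = {m : ℕ | ∀ i : ℕ × ℕ, Z i ≠ 0 → i.1 < m} := by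
    ext m
    constructor
    · rintro ⟨n, hn, rfl⟩
      intro i hi
      have hj : Z (max n.1 N, max n.2 N) = 0 := by
        by_contra hj
        have := (hN _ hj).1
        simp only at this
        omega
      have hne : Z i ≠ Z (max n.1 N, max n.2 N) := by rw [hj]; exact hi
      rcases hn i _ hne with ⟨h1, _⟩ | ⟨h1, _⟩
      · exact h1
      · simp only at h1; omega
    · intro hm
      refine ⟨(m, N), fun i j hij => ?_, rfl⟩
      by_cases h1 : Z i = 0
      · have h2 : Z j ≠ 0 := fun h => hij (h1.trans h.symm)
        exact Or.inr ⟨hm j h2, (hN j h2).2⟩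
      · exact Or.inl ⟨hm i h1, (hN i h1).2⟩
  rw [rowsC, himg, rowsZ]

lemma colsC_eq_colsZ {Z : ℕ × ℕ → V} (hZ : EvZ Z) : colsC Z = colsZ Z := by
  obtain ⟨N, hN⟩ := evz_bound hZ
  have himg : Prod.snd '' sizeSetC Z = {m : ℕ | ∀ i : ℕ × ℕ, Z i ≠ 0 → i.2 < m} := by
    ext m
    constructor
    · rintro ⟨n, hn, rfl⟩
      intro i hi
      have hj : Z (max n.1 N, max n.2 N) = 0 := by
        by_contra hj
        have := (hN _ hj).1
        simp only at this
        omega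
      have hne : Z i ≠ Z (max n.1 N, max n.2 N) := by rw [hj]; exact hi
      rcases hn i _ hne with ⟨_, h1⟩ | ⟨h1, _⟩
      · exact h1
      · simp only at h1; omega
    · intro hm
      refine ⟨(N, m), fun i j hij => ?_, rfl⟩
      by_cases h1 : Z i = 0
      · have h2 : Z j ≠ 0 := fun h => hij (h1.trans h.symm)
        exact Or.inr ⟨(hN j h2).1, hm j h2⟩
      · exact Or.inl ⟨(hN i h1).1, hm i h1⟩
  rw [colsC, himg, colsZ]

lemma EvZ_add {X Y : ℕ × ℕ → V} (hX : EvZ X) (hY : EvZ Y) : EvZ (X + Y) :=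
  (hX.union hY).subset (Function.support_add X Y)

lemma EvZ_shift {B : ℕ × ℕ → V} (hB : EvZ B) (r c : ℕ) : EvZ (shiftRC r c B) := by
  apply (hB.image (fun q : ℕ × ℕ => (q.1 + r, q.2 + c))).subset
  intro i hi
  simp only [Function.mem_support, shiftRC] at hi
  split_ifs at hi with h
  · exact ⟨(i.1 - r, i.2 - c), hi, by simp only [Prod.ext_iff]; omega⟩
  · exact absurd rfl hi

lemma dconc_apply {A B : ℕ × ℕ → V} (hA : EvZ A) (i : ℕ × ℕ) :
    dconc A B i = A i + shiftRC (rowsZ A) (colsZ A) B i := by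
  show A i + (zeroIns (0 : Fin 2) 0)^[rowsC A] ((zeroIns (1 : Fin 2) 0)^[colsC A] B) i = _
  rw [rowsC_eq_rowsZ hA, colsC_eq_colsZ hA]
  congr 1
  rw [zeroIns0_iterate, shiftRC]
  by_cases h : rowsZ A ≤ i.1
  · rw [if_pos h, zeroIns1_iterate]
    by_cases h2 : colsZ A ≤ i.2
    · rw [if_pos (by simpa using h2), if_pos ⟨h, h2⟩]
    · rw [if_neg (by simpa using h2), if_neg (by tauto)]
  · rw [if_neg h, if_neg (by tauto)]

lemma dconc_eq {A B : ℕ × ℕ → V} (hA : EvZ A) :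
    dconc A B = A + shiftRC (rowsZ A) (colsZ A) B :=
  funext fun i => dconc_apply hA i

lemma rowsZ_D {A B : ℕ × ℕ → V} (hA : EvZ A) (hB : EvZ B) :
    rowsZ (A + shiftRC (rowsZ A) (colsZ A) B) = rowsZ A + rowsZ B := by
  apply le_antisymm
  · apply rowsZ_le
    intro i hi
    have hor : A i ≠ 0 ∨ shiftRC (rowsZ A) (colsZ A) B i ≠ 0 := by
      by_contra hc
      push_neg at hc
      exact hi (by show A i + _ = 0; rw [hc.1, hc.2, add_zero])
    rcases hor with h | h
    · have := rowsZ_spec hA h; omega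
    · simp only [shiftRC] at h
      split_ifs at h with hcond
      · have := rowsZ_spec hB h
        simp only at this
        omega
      · exact absurd rfl h
  · by_cases hrB : 0 < rowsZ B
    · obtain ⟨i0, hi0, hi0r⟩ := rowsZ_witness hB hrB
      have hval : (A + shiftRC (rowsZ A) (colsZ A) B) (i0.1 + rowsZ A, i0.2 + colsZ A) ≠ 0 := by
        have hA0 : A (i0.1 + rowsZ A, i0.2 + colsZ A) = 0 := by
          by_contra h
          have := rowsZ_spec hA h
          simp only at this
          omega
        show A _ + _ ≠ 0
        rw [hA0, zero_add, shiftRC]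
        rw [if_pos (by constructor <;> simp)]
        simpa using hi0
      have := rowsZ_spec (EvZ_add hA (EvZ_shift hB _ _)) hval
      simp only at this
      omega
    · have hrB0 : rowsZ B = 0 := by omega
      have hB0 : ∀ i : ℕ × ℕ, B i = 0 := fun i => by
        by_contra h
        have := rowsZ_spec hB h
        omega
      have hsum : A + shiftRC (rowsZ A) (colsZ A) B = A := by
        funext i
        show A i + _ = A i
        simp [shiftRC, hB0]
      rw [hsum, hrB0, add_zero]

lemma colsZ_D {A B : ℕ × ℕ → V} (hA : EvZ A) (hB : EvZ B) :
    colsZ (A + shiftRC (rowsZ A) (colsZ A) B) = colsZ A + colsZ B := by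
  apply le_antisymm
  · apply colsZ_le
    intro i hi
    have hor : A i ≠ 0 ∨ shiftRC (rowsZ A) (colsZ A) B i ≠ 0 := by
      by_contra hc
      push_neg at hc
      exact hi (by show A i + _ = 0; rw [hc.1, hc.2, add_zero])
    rcases hor with h | h
    · have := colsZ_spec hA h; omega
    · simp only [shiftRC] at h
      split_ifs at h with hcond
      · have := colsZ_spec hB h
        simp only at this
        omega
      · exact absurd rfl h
  · by_cases hcB : 0 < colsZ B
    · obtain ⟨i0, hi0, hi0c⟩ := colsZ_witness hB hcB
      have hval : (A + shiftRC (rowsZ A) (colsZ A) B) (i0.1 + rowsZ A, i0.2 + colsZ A) ≠ 0 := by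
        have hA0 : A (i0.1 + rowsZ A, i0.2 + colsZ A) = 0 := by
          by_contra h
          have := colsZ_spec hA h
          simp only at this
          omega
        show A _ + _ ≠ 0
        rw [hA0, zero_add, shiftRC]
        rw [if_pos (by constructor <;> simp)]
        simpa using hi0
      have := colsZ_spec (EvZ_add hA (EvZ_shift hB _ _)) hval
      simp only at this
      omega
    · have hcB0 : colsZ B = 0 := by omega
      have hB0 : ∀ i : ℕ × ℕ, B i = 0 := fun i => by
        by_contra h
        have := colsZ_spec hB h
        omega
      have hsum : A + shiftRC (rowsZ A) (colsZ A) B = A := by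
        funext i
        show A i + _ = A i
        simp [shiftRC, hB0]
      rw [hsum, hcB0, add_zero]

lemma sig_add {X Y : ℕ × ℕ → V} (hX : EvZ X) (hY : EvZ Y) :
    sigmaOp (X + Y) = sigmaOp X + sigmaOp Y := by
  funext i
  show ∑ᶠ p ∈ {p : ℕ × ℕ | i.1 ≤ p.1 ∧ i.2 ≤ p.2}, (X + Y) p
      = (∑ᶠ p ∈ {p : ℕ × ℕ | i.1 ≤ p.1 ∧ i.2 ≤ p.2}, X p)
        + ∑ᶠ p ∈ {p : ℕ × ℕ | i.1 ≤ p.1 ∧ i.2 ≤ p.2}, Y p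
  set S := {p : ℕ × ℕ | i.1 ≤ p.1 ∧ i.2 ≤ p.2}
  rw [finsum_mem_def, finsum_mem_def, finsum_mem_def]
  have hind : Set.indicator S (X + Y)
      = fun p => Set.indicator S X p + Set.indicator S Y p := by
    funext p
    by_cases h : p ∈ S <;> simp [Set.indicator_apply, h]
  rw [hind]
  exact finsum_add_distrib
    (hX.subset ((Set.support_indicator).trans_subset Set.inter_subset_right))
    (hY.subset ((Set.support_indicator).trans_subset Set.inter_subset_right))

lemma sig_zero {Z : ℕ × ℕ → V} {i : ℕ × ℕ}
    (h : ∀ p : ℕ × ℕ, i.1 ≤ p.1 → i.2 ≤ p.2 → Z p = 0) : sigmaOp Z i = 0 :=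
  finsum_mem_of_eqOn_zero fun p hp => h p hp.1 hp.2

lemma sig_shift {B : ℕ × ℕ → V} (r c : ℕ) (i : ℕ × ℕ) :
    sigmaOp (shiftRC r c B) i = sigmaOp B (i.1 - r, i.2 - c) := by
  show ∑ᶠ p ∈ {p : ℕ × ℕ | i.1 ≤ p.1 ∧ i.2 ≤ p.2}, shiftRC r c B p = _
  have step1 : ∑ᶠ p ∈ {p : ℕ × ℕ | i.1 ≤ p.1 ∧ i.2 ≤ p.2}, shiftRC r c B p
      = ∑ᶠ p ∈ {p : ℕ × ℕ | max i.1 r ≤ p.1 ∧ max i.2 c ≤ p.2}, shiftRC r c B p := by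
    apply finsum_mem_inter_support_eq'
    intro p hp
    simp only [Function.mem_support, shiftRC] at hp
    by_cases hcond : r ≤ p.1 ∧ c ≤ p.2
    · simp only [Set.mem_setOf_eq]
      omega
    · rw [if_neg hcond] at hp
      exact absurd rfl hp
  rw [step1]
  have himg : {p : ℕ × ℕ | max i.1 r ≤ p.1 ∧ max i.2 c ≤ p.2}
      = (fun q : ℕ × ℕ => (q.1 + r, q.2 + c)) ''
          {q : ℕ × ℕ | i.1 - r ≤ q.1 ∧ i.2 - c ≤ q.2} := by
    ext p
    constructor
    · intro hmem0
      have h0 : max i.1 r ≤ p.1 ∧ max i.2 c ≤ p.2 := hmem0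
      refine ⟨(p.1 - r, p.2 - c),
        show i.1 - r ≤ p.1 - r ∧ i.2 - c ≤ p.2 - c by omega, ?_⟩
      show ((p.1 - r + r, p.2 - c + c) : ℕ × ℕ) = (p.1, p.2)
      exact congrArg₂ Prod.mk (by omega) (by omega)
    · rintro ⟨q, hq, rfl⟩
      have h0 : i.1 - r ≤ q.1 ∧ i.2 - c ≤ q.2 := hq
      show max i.1 r ≤ q.1 + r ∧ max i.2 c ≤ q.2 + c
      omega
  rw [himg, finsum_mem_image (by
    intro a _ b _ h
    simp only [Prod.mk.injEq] at h
    exact Prod.ext (by omega) (by omega))]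
  have hcong : ∀ q ∈ {q : ℕ × ℕ | i.1 - r ≤ q.1 ∧ i.2 - c ≤ q.2},
      shiftRC r c B (q.1 + r, q.2 + c) = B q := by
    intro q hq
    show (if r ≤ q.1 + r ∧ c ≤ q.2 + c then B (q.1 + r - r, q.2 + c - c) else 0) = B q
    rw [if_pos ⟨by omega, by omega⟩]
    exact congrX B (by omega) (by omega)
  rw [finsum_mem_congr rfl hcong]
  rfl

/-- Row tail sum. -/
noncomputable def rT (Z : ℕ × ℕ → V) (i j : ℕ) : V :=
  ∑ᶠ p ∈ {p : ℕ × ℕ | p.1 = i ∧ j ≤ p.2}, Z p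

lemma sig_row_step {Z : ℕ × ℕ → V} (hZ : EvZ Z) (i j : ℕ) :
    sigmaOp Z (i, j) = sigmaOp Z (i + 1, j) + rT Z i j := by
  have hset : {p : ℕ × ℕ | i ≤ p.1 ∧ j ≤ p.2}
      = {p : ℕ × ℕ | i + 1 ≤ p.1 ∧ j ≤ p.2} ∪ {p : ℕ × ℕ | p.1 = i ∧ j ≤ p.2} := by
    ext p
    simp only [Set.mem_setOf_eq, Set.mem_union]
    omega
  show ∑ᶠ p ∈ {p : ℕ × ℕ | i ≤ p.1 ∧ j ≤ p.2}, Z p = _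
  rw [hset]
  exact finsum_mem_union'
    (Set.disjoint_left.mpr fun p hp1 hp2 => by
      simp only [Set.mem_setOf_eq] at hp1 hp2; omega)
    (hZ.subset Set.inter_subset_right)
    (hZ.subset Set.inter_subset_right)

lemma rT_step {Z : ℕ × ℕ → V} (hZ : EvZ Z) (i j : ℕ) :
    rT Z i j = Z (i, j) + rT Z i (j + 1) := by
  have hset : {p : ℕ × ℕ | p.1 = i ∧ j ≤ p.2}
      = {((i, j) : ℕ × ℕ)} ∪ {p : ℕ × ℕ | p.1 = i ∧ j + 1 ≤ p.2} := by
    ext p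
    simp only [Set.mem_setOf_eq, Set.mem_union, Set.mem_singleton_iff, Prod.ext_iff]
    omega
  rw [rT, hset, finsum_mem_union'
    (Set.disjoint_left.mpr fun p hp1 hp2 => by
      simp only [Set.mem_singleton_iff, Prod.ext_iff] at hp1
      simp only [Set.mem_setOf_eq] at hp2
      omega)
    ((hZ.subset Set.inter_subset_right))
    ((hZ.subset Set.inter_subset_right)), finsum_mem_singleton]
  rfl

/-- Column tail sum. -/
noncomputable def cT (Z : ℕ × ℕ → V) (i j : ℕ) : V :=
  ∑ᶠ p ∈ {p : ℕ × ℕ | i ≤ p.1 ∧ p.2 = j}, Z p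

lemma sig_col_step {Z : ℕ × ℕ → V} (hZ : EvZ Z) (i j : ℕ) :
    sigmaOp Z (i, j) = sigmaOp Z (i, j + 1) + cT Z i j := by
  have hset : {p : ℕ × ℕ | i ≤ p.1 ∧ j ≤ p.2}
      = {p : ℕ × ℕ | i ≤ p.1 ∧ j + 1 ≤ p.2} ∪ {p : ℕ × ℕ | i ≤ p.1 ∧ p.2 = j} := by
    ext p
    simp only [Set.mem_setOf_eq, Set.mem_union]
    omega
  show ∑ᶠ p ∈ {p : ℕ × ℕ | i ≤ p.1 ∧ j ≤ p.2}, Z p = _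
  rw [hset]
  exact finsum_mem_union'
    (Set.disjoint_left.mpr fun p hp1 hp2 => by
      simp only [Set.mem_setOf_eq] at hp1 hp2; omega)
    (hZ.subset Set.inter_subset_right)
    (hZ.subset Set.inter_subset_right)

lemma cT_step {Z : ℕ × ℕ → V} (hZ : EvZ Z) (i j : ℕ) :
    cT Z i j = Z (i, j) + cT Z (i + 1) j := by
  have hset : {p : ℕ × ℕ | i ≤ p.1 ∧ p.2 = j}
      = {((i, j) : ℕ × ℕ)} ∪ {p : ℕ × ℕ | i + 1 ≤ p.1 ∧ p.2 = j} := by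
    ext p
    simp only [Set.mem_setOf_eq, Set.mem_union, Set.mem_singleton_iff, Prod.ext_iff]
    omega
  rw [cT, hset, finsum_mem_union'
    (Set.disjoint_left.mpr fun p hp1 hp2 => by
      simp only [Set.mem_singleton_iff, Prod.ext_iff] at hp1
      simp only [Set.mem_setOf_eq] at hp2
      omega)
    ((hZ.subset Set.inter_subset_right))
    ((hZ.subset Set.inter_subset_right)), finsum_mem_singleton]
  rfl

lemma delta_sigma {Z : ℕ × ℕ → V} (hZ : EvZ Z) : diffOp (sigmaOp Z) = Z := by
  funext i
  obtain ⟨i, j⟩ := i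
  show sigmaOp Z (i + 1, j + 1) - sigmaOp Z (i + 1, j) - sigmaOp Z (i, j + 1)
      + sigmaOp Z (i, j) = Z (i, j)
  rw [sig_row_step hZ i j, sig_row_step hZ i (j + 1), rT_step hZ i j]
  abel

lemma sig_outside_zero {Z : ℕ × ℕ → V} (hZ : EvZ Z) {p : ℕ × ℕ}
    (hp : rowsZ Z ≤ p.1 ∨ colsZ Z ≤ p.2) : sigmaOp Z p = 0 := by
  apply sig_zero
  intro q hq1 hq2
  by_contra hq
  have h1 := rowsZ_spec hZ hq
  have h2 := colsZ_spec hZ hq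
  omega

lemma rowsC_sigma {Z : ℕ × ℕ → V} (hZ : EvZ Z) : rowsC (sigmaOp Z) = rowsZ Z := by
  have hmem : (rowsZ Z, colsZ Z) ∈ sizeSetC (sigmaOp Z) := by
    intro i j hij
    by_contra hc
    push_neg at hc
    have hi0 : sigmaOp Z i = 0 := sig_outside_zero hZ (by
      have := hc.1; simp only at this ⊢; omega)
    have hj0 : sigmaOp Z j = 0 := sig_outside_zero hZ (by
      have := hc.2; simp only at this ⊢; omega)
    exact hij (hi0.trans hj0.symm)
  have hub : rowsC (sigmaOp Z) ≤ rowsZ Z :=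
    Nat.sInf_le ⟨(rowsZ Z, colsZ Z), hmem, rfl⟩
  by_cases hpos : 0 < rowsZ Z
  · obtain ⟨i0, hi0, hi0r⟩ := rowsZ_witness hZ hpos
    have hrow : ∀ t : ℕ, sigmaOp Z (i0.1, t) = rT Z i0.1 t := fun t => by
      rw [sig_row_step hZ i0.1 t, sig_outside_zero hZ (Or.inl (by simp only; omega)),
        zero_add]
    have hex : ∃ t : ℕ, sigmaOp Z (i0.1, t) ≠ 0 := by
      by_contra hcon
      push_neg at hcon
      have h1 := hcon i0.2
      have h2 := hcon (i0.2 + 1)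
      rw [hrow] at h1 h2
      have := rT_step hZ i0.1 i0.2
      rw [h1, h2, add_zero] at this
      exact hi0 (by rw [← this])
    obtain ⟨t, ht⟩ := hex
    have hne : (Prod.fst '' sizeSetC (sigmaOp Z)).Nonempty :=
      ⟨rowsZ Z, ⟨(rowsZ Z, colsZ Z), hmem, rfl⟩⟩
    obtain ⟨n, hn, hfst⟩ := Nat.sInf_mem hne
    have hj0 : sigmaOp Z (max n.1 (rowsZ Z), n.2) = 0 :=
      sig_outside_zero hZ (Or.inl (by simp only; omega))
    have hne2 : sigmaOp Z (i0.1, t) ≠ sigmaOp Z (max n.1 (rowsZ Z), n.2) := by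
      rw [hj0]; exact ht
    rcases hn _ _ hne2 with ⟨h1, _⟩ | ⟨h1, _⟩
    · simp only at h1
      rw [rowsC] at hub ⊢
      omega
    · simp only at h1
      omega
  · have : rowsZ Z = 0 := by omega
    omega

lemma colsC_sigma {Z : ℕ × ℕ → V} (hZ : EvZ Z) : colsC (sigmaOp Z) = colsZ Z := by
  have hmem : (rowsZ Z, colsZ Z) ∈ sizeSetC (sigmaOp Z) := by
    intro i j hij
    by_contra hc
    push_neg at hc
    have hi0 : sigmaOp Z i = 0 := sig_outside_zero hZ (by
      have := hc.1; simp only at this ⊢; omega)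
    have hj0 : sigmaOp Z j = 0 := sig_outside_zero hZ (by
      have := hc.2; simp only at this ⊢; omega)
    exact hij (hi0.trans hj0.symm)
  have hub : colsC (sigmaOp Z) ≤ colsZ Z :=
    Nat.sInf_le ⟨(rowsZ Z, colsZ Z), hmem, rfl⟩
  by_cases hpos : 0 < colsZ Z
  · obtain ⟨i0, hi0, hi0c⟩ := colsZ_witness hZ hpos
    have hcol : ∀ t : ℕ, sigmaOp Z (t, i0.2) = cT Z t i0.2 := fun t => by
      rw [sig_col_step hZ t i0.2, sig_outside_zero hZ (Or.inr (by simp only; omega)),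
        zero_add]
    have hex : ∃ t : ℕ, sigmaOp Z (t, i0.2) ≠ 0 := by
      by_contra hcon
      push_neg at hcon
      have h1 := hcon i0.1
      have h2 := hcon (i0.1 + 1)
      rw [hcol] at h1 h2
      have := cT_step hZ i0.1 i0.2
      rw [h1, h2, add_zero] at this
      exact hi0 (by rw [← this])
    obtain ⟨t, ht⟩ := hex
    have hne : (Prod.snd '' sizeSetC (sigmaOp Z)).Nonempty :=
      ⟨colsZ Z, ⟨(rowsZ Z, colsZ Z), hmem, rfl⟩⟩
    obtain ⟨n, hn, hsnd⟩ := Nat.sInf_mem hne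
    have hj0 : sigmaOp Z (n.1, max n.2 (colsZ Z)) = 0 :=
      sig_outside_zero hZ (Or.inr (by simp only; omega))
    have hne2 : sigmaOp Z (t, i0.2) ≠ sigmaOp Z (n.1, max n.2 (colsZ Z)) := by
      rw [hj0]; exact ht
    rcases hn _ _ hne2 with ⟨_, h1⟩ | ⟨_, h1⟩
    · simp only at h1
      rw [colsC] at hub ⊢
      omega
    · simp only at h1
      omega
  · have : colsZ Z = 0 := by omega
    omega

end Aux13

end TwoParam

open TwoParam in
/-- size additivity, associativity of `⊘`, and compatibility
`ς(A ⊘ B) = ςA ⊠ ςB`. -/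
theorem statement13 {d : ℕ} {R : Type*} [CommRing R] [IsDomain R]
    (A B C : ℕ × ℕ → Fin d → R) (hA : EvZ A) (hB : EvZ B) (hC : EvZ C) :
    rowsC (dconc A B) = rowsC A + rowsC B ∧
    colsC (dconc A B) = colsC A + colsC B ∧
    dconc (dconc A B) C = dconc A (dconc B C) ∧
    sigmaOp (dconc A B) = bconc (sigmaOp A) (sigmaOp B) := by
  have hsB : EvZ (shiftRC (rowsZ A) (colsZ A) B) := EvZ_shift hB _ _
  have hDAB : dconc A B = A + shiftRC (rowsZ A) (colsZ A) B := dconc_eq hA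
  have hAB : EvZ (dconc A B) := by rw [hDAB]; exact EvZ_add hA hsB
  have h1 : rowsC (dconc A B) = rowsC A + rowsC B := by
    rw [rowsC_eq_rowsZ hAB, rowsC_eq_rowsZ hA, rowsC_eq_rowsZ hB, hDAB,
      rowsZ_D hA hB]
  have h2 : colsC (dconc A B) = colsC A + colsC B := by
    rw [colsC_eq_colsZ hAB, colsC_eq_colsZ hA, colsC_eq_colsZ hB, hDAB,
      colsZ_D hA hB]
  refine ⟨h1, h2, ?_, ?_⟩
  · -- associativity
    have hDBC : dconc B C = B + shiftRC (rowsZ B) (colsZ B) C := dconc_eq hB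
    have hr : rowsZ (dconc A B) = rowsZ A + rowsZ B := by
      rw [hDAB, rowsZ_D hA hB]
    have hc : colsZ (dconc A B) = colsZ A + colsZ B := by
      rw [hDAB, colsZ_D hA hB]
    funext i
    rw [dconc_apply hAB i, dconc_apply hA i, hr, hc, dconc_apply hA, hDBC]
    simp only [Pi.add_apply, shiftRC]
    rw [show i.1 - (rowsZ A + rowsZ B) = i.1 - rowsZ A - rowsZ B from by omega,
        show i.2 - (colsZ A + colsZ B) = i.2 - colsZ A - colsZ B from by omega]
    split_ifs
    all_goals try (exfalso; omega)
    all_goals abel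
  · -- compatibility with sigma
    funext i
    have hL : sigmaOp (dconc A B) i
        = sigmaOp A i + sigmaOp B (i.1 - rowsZ A, i.2 - colsZ A) := by
      rw [hDAB, sig_add hA hsB]
      show sigmaOp A i + sigmaOp (shiftRC (rowsZ A) (colsZ A) B) i = _
      rw [sig_shift]
    rw [hL]
    show _ = sigmaOp (diffOp (sigmaOp A)) i
      + (warp (0 : Fin 2) 0)^[rowsC (sigmaOp A)]
          ((warp (1 : Fin 2) 0)^[colsC (sigmaOp A)] (sigmaOp B)) i
    rw [delta_sigma hA, rowsC_sigma hA, colsC_sigma hA, warp0_iterate,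
      warp1_iterate]
end

section
/- QSym is a free R-module, and the family of monomial quasisymmetric functions {M_a}, indexed by all ℕ₀-matrix compositions a (including M_e = 1 for the empty composition), is an R-module basis of QSym. -/
open scoped Classical

section Aux
namespace TwoParam

theorem NMat.ext2 {a b : NMat} (hr : a.rows = b.rows) (hc : a.cols = b.cols)
    (he : ∀ i j, a.entry i j = b.entry i j) : a = b := by
  obtain ⟨r, c, E, p⟩ := a
  obtain ⟨r', c', E', p'⟩ := b
  simp only at hr hc he
  subst hr; subst hc
  have hE : E = E' := funext fun i => funext fun j => he i j
  subst hE
  rfl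

/-- Row index set of a monomial. -/
noncomputable def rset (m : Mon) : Finset ℕ := m.support.image Prod.fst
/-- Column index set of a monomial. -/
noncomputable def cset (m : Mon) : Finset ℕ := m.support.image Prod.snd

theorem mem_rset_iff {m : Mon} {x : ℕ} : x ∈ rset m ↔ ∃ y, m (x, y) ≠ 0 := by
  simp only [rset, Finset.mem_image, Finsupp.mem_support_iff, Prod.exists]
  constructor
  · rintro ⟨u, v, h, rfl⟩; exact ⟨v, h⟩
  · rintro ⟨y, h⟩; exact ⟨x, y, h, rfl⟩

theorem mem_cset_iff {m : Mon} {y : ℕ} : y ∈ cset m ↔ ∃ x, m (x, y) ≠ 0 := by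
  simp only [cset, Finset.mem_image, Finsupp.mem_support_iff, Prod.exists]
  constructor
  · rintro ⟨u, v, h, rfl⟩; exact ⟨u, h⟩
  · rintro ⟨x, h⟩; exact ⟨x, y, h, rfl⟩

noncomputable def rho (m : Mon) : Fin (rset m).card → ℕ := ⇑((rset m).orderEmbOfFin rfl)
noncomputable def gam (m : Mon) : Fin (cset m).card → ℕ := ⇑((cset m).orderEmbOfFin rfl)

theorem rho_strictMono (m : Mon) : StrictMono (rho m) :=
  ((rset m).orderEmbOfFin rfl).strictMono
theorem gam_strictMono (m : Mon) : StrictMono (gam m) :=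
  ((cset m).orderEmbOfFin rfl).strictMono
theorem rho_mem (m : Mon) (i) : rho m i ∈ rset m := (rset m).orderEmbOfFin_mem rfl i
theorem gam_mem (m : Mon) (i) : gam m i ∈ cset m := (cset m).orderEmbOfFin_mem rfl i
theorem rho_surj {m : Mon} {x : ℕ} (hx : x ∈ rset m) : ∃ i, rho m i = x := by
  have := (rset m).range_orderEmbOfFin rfl
  have : x ∈ Set.range (rho m) := by rw [rho, this]; exact_mod_cast hx
  exact this
theorem gam_surj {m : Mon} {y : ℕ} (hy : y ∈ cset m) : ∃ i, gam m i = y := by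
  have := (cset m).range_orderEmbOfFin rfl
  have : y ∈ Set.range (gam m) := by rw [gam, this]; exact_mod_cast hy
  exact this

/-- Canonical packing of a monomial into an `ℕ₀`-matrix. -/
noncomputable def pack (m : Mon) : NMat where
  rows := (rset m).card
  cols := (cset m).card
  entry := fun i j =>
    if h : i < (rset m).card ∧ j < (cset m).card then m (rho m ⟨i, h.1⟩, gam m ⟨j, h.2⟩)
    else 0
  entry_eq_zero := by
    intro i j h
    rw [dif_neg]
    omega

theorem monomialOf_apply (a : NMat) (ι : Fin a.rows → ℕ) (κ : Fin a.cols → ℕ) (x y : ℕ) :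
    monomialOf a ι κ (x, y) =
      ∑ s : Fin a.rows, ∑ t : Fin a.cols,
        if ι s = x ∧ κ t = y then a.entry s t else 0 := by
  unfold monomialOf
  rw [Finsupp.finset_sum_apply]
  refine Finset.sum_congr rfl fun s _ => ?_
  rw [Finsupp.finset_sum_apply]
  refine Finset.sum_congr rfl fun t _ => ?_
  rw [Finsupp.single_apply]
  congr 1
  simp [Prod.ext_iff]

theorem monomialOf_apply_of_inj {a : NMat} {ι : Fin a.rows → ℕ} {κ : Fin a.cols → ℕ}
    (hι : Function.Injective ι) (hκ : Function.Injective κ)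
    (s0 : Fin a.rows) (t0 : Fin a.cols) :
    monomialOf a ι κ (ι s0, κ t0) = a.entry s0 t0 := by
  rw [monomialOf_apply]
  rw [Finset.sum_eq_single s0]
  · rw [Finset.sum_eq_single t0]
    · simp
    · intro t _ ht
      simp [hκ.eq_iff, ht]
    · simp
  · intro s _ hs
    apply Finset.sum_eq_zero
    intro t _
    simp [hι.eq_iff, hs]
  · simp

theorem monomialOf_apply_eq_zero {a : NMat} {ι : Fin a.rows → ℕ} {κ : Fin a.cols → ℕ}
    {x y : ℕ} (h : (∀ s, ι s ≠ x) ∨ (∀ t, κ t ≠ y)) :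
    monomialOf a ι κ (x, y) = 0 := by
  rw [monomialOf_apply]
  apply Finset.sum_eq_zero
  intro s _
  apply Finset.sum_eq_zero
  intro t _
  rcases h with h | h
  · simp [h s]
  · simp [h t]

theorem rset_monomialOf {a : NMat} (ha : a.IsComp) {ι : Fin a.rows → ℕ} {κ : Fin a.cols → ℕ}
    (hι : StrictMono ι) (hκ : StrictMono κ) :
    rset (monomialOf a ι κ) = Finset.image ι Finset.univ := by
  ext x
  rw [mem_rset_iff]
  constructor
  · rintro ⟨y, hy⟩
    by_contra hx
    simp only [Finset.mem_image, Finset.mem_univ, true_and] at hx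
    push_neg at hx
    exact hy (monomialOf_apply_eq_zero (Or.inl hx))
  · intro hx
    simp only [Finset.mem_image, Finset.mem_univ, true_and] at hx
    obtain ⟨s, rfl⟩ := hx
    obtain ⟨j, hj, hj0⟩ := ha.1 s s.isLt
    refine ⟨κ ⟨j, hj⟩, ?_⟩
    rw [monomialOf_apply_of_inj hι.injective hκ.injective s ⟨j, hj⟩]
    exact hj0

theorem cset_monomialOf {a : NMat} (ha : a.IsComp) {ι : Fin a.rows → ℕ} {κ : Fin a.cols → ℕ}
    (hι : StrictMono ι) (hκ : StrictMono κ) :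
    cset (monomialOf a ι κ) = Finset.image κ Finset.univ := by
  ext y
  rw [mem_cset_iff]
  constructor
  · rintro ⟨x, hx⟩
    by_contra hy
    simp only [Finset.mem_image, Finset.mem_univ, true_and] at hy
    push_neg at hy
    exact hx (monomialOf_apply_eq_zero (Or.inr hy))
  · intro hy
    simp only [Finset.mem_image, Finset.mem_univ, true_and] at hy
    obtain ⟨t, rfl⟩ := hy
    obtain ⟨i, hi, hi0⟩ := ha.2 t t.isLt
    refine ⟨ι ⟨i, hi⟩, ?_⟩
    rw [monomialOf_apply_of_inj hι.injective hκ.injective ⟨i, hi⟩ t]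
    exact hi0

theorem pack_monomialOf {a : NMat} (ha : a.IsComp) {ι : Fin a.rows → ℕ} {κ : Fin a.cols → ℕ}
    (hι : StrictMono ι) (hκ : StrictMono κ) :
    pack (monomialOf a ι κ) = a := by
  set m := monomialOf a ι κ with hm
  have hrs : rset m = Finset.image ι Finset.univ := rset_monomialOf ha hι hκ
  have hcs : cset m = Finset.image κ Finset.univ := cset_monomialOf ha hι hκ
  have hrc : (rset m).card = a.rows := by
    rw [hrs, Finset.card_image_of_injective _ hι.injective, Finset.card_univ, Fintype.card_fin]
  have hcc : (cset m).card = a.cols := by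
    rw [hcs, Finset.card_image_of_injective _ hκ.injective, Finset.card_univ, Fintype.card_fin]
  have hρ : ∀ i : Fin (rset m).card, rho m i = ι (Fin.cast hrc i) := by
    have h1 : (fun i : Fin (rset m).card => ι (Fin.cast hrc i)) = ⇑((rset m).orderEmbOfFin rfl) := by
      apply Finset.orderEmbOfFin_unique
      · have h2 : ∀ x, x ∈ Finset.image ι Finset.univ → x ∈ rset m := fun x hx => by
          rw [hrs]; exact hx
        intro i
        exact h2 _ (Finset.mem_image_of_mem _ (Finset.mem_univ _))
      · exact hι.comp fun _ _ h => h
    intro i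
    rw [rho, ← h1]
  have hγ : ∀ j : Fin (cset m).card, gam m j = κ (Fin.cast hcc j) := by
    have h1 : (fun j : Fin (cset m).card => κ (Fin.cast hcc j)) = ⇑((cset m).orderEmbOfFin rfl) := by
      apply Finset.orderEmbOfFin_unique
      · have h2 : ∀ y, y ∈ Finset.image κ Finset.univ → y ∈ cset m := fun y hy => by
          rw [hcs]; exact hy
        intro j
        exact h2 _ (Finset.mem_image_of_mem _ (Finset.mem_univ _))
      · exact hκ.comp fun _ _ h => h
    intro j
    rw [gam, ← h1]
  refine NMat.ext2 hrc hcc fun i j => ?_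
  show (if h : i < (rset m).card ∧ j < (cset m).card
      then m (rho m ⟨i, h.1⟩, gam m ⟨j, h.2⟩) else 0) = a.entry i j
  by_cases h : i < (rset m).card ∧ j < (cset m).card
  · rw [dif_pos h, hρ, hγ]
    have := monomialOf_apply_of_inj (a := a) hι.injective hκ.injective
      (Fin.cast hrc ⟨i, h.1⟩) (Fin.cast hcc ⟨j, h.2⟩)
    rw [← hm] at this
    rw [this]
    simp [Fin.coe_cast]
  · rw [dif_neg h]
    rw [a.entry_eq_zero i j (by omega)]

theorem pack_isComp (m : Mon) : (pack m).IsComp := by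
  constructor
  · intro i hi
    have hmem := rho_mem m ⟨i, hi⟩
    rw [mem_rset_iff] at hmem
    obtain ⟨y, hy⟩ := hmem
    have hyc : y ∈ cset m := mem_cset_iff.mpr ⟨rho m ⟨i, hi⟩, hy⟩
    obtain ⟨j, hj⟩ := gam_surj hyc
    refine ⟨j, j.isLt, ?_⟩
    show (if h : (i : ℕ) < (rset m).card ∧ (j : ℕ) < (cset m).card
      then m (rho m ⟨i, h.1⟩, gam m ⟨(j : ℕ), h.2⟩) else 0) ≠ 0
    rw [dif_pos ⟨hi, j.isLt⟩]
    simpa [Fin.eta, hj] using hy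
  · intro j hj
    have hmem := gam_mem m ⟨j, hj⟩
    rw [mem_cset_iff] at hmem
    obtain ⟨x, hx⟩ := hmem
    have hxr : x ∈ rset m := mem_rset_iff.mpr ⟨gam m ⟨j, hj⟩, hx⟩
    obtain ⟨i, hi⟩ := rho_surj hxr
    refine ⟨i, i.isLt, ?_⟩
    show (if h : (i : ℕ) < (rset m).card ∧ (j : ℕ) < (cset m).card
      then m (rho m ⟨(i : ℕ), h.1⟩, gam m ⟨j, h.2⟩) else 0) ≠ 0
    rw [dif_pos ⟨i.isLt, hj⟩]
    simpa [Fin.eta, hi] using hx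

theorem monomialOf_pack (m : Mon) :
    monomialOf (pack m) (rho m) (gam m) = m := by
  ext p
  obtain ⟨x, y⟩ := p
  by_cases hx : x ∈ rset m
  · by_cases hy : y ∈ cset m
    · obtain ⟨s0, rfl⟩ := rho_surj hx
      obtain ⟨t0, rfl⟩ := gam_surj hy
      have h1 : monomialOf (pack m) (rho m) (gam m) (rho m s0, gam m t0)
          = (pack m).entry s0 t0 :=
        monomialOf_apply_of_inj (a := pack m)
          (rho_strictMono m).injective (gam_strictMono m).injective s0 t0
      rw [h1]
      show (if h : (s0 : ℕ) < (rset m).card ∧ (t0 : ℕ) < (cset m).card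
        then m (rho m ⟨(s0 : ℕ), h.1⟩, gam m ⟨(t0 : ℕ), h.2⟩) else 0) = _
      rw [dif_pos ⟨s0.isLt, t0.isLt⟩]
    · have h1 : monomialOf (pack m) (rho m) (gam m) (x, y) = 0 :=
        monomialOf_apply_eq_zero (a := pack m)
          (Or.inr fun t ht => hy (by rw [← ht]; exact gam_mem m t))
      rw [h1]
      by_contra h
      exact hy (mem_cset_iff.mpr ⟨x, fun h0 => h (h0 ▸ rfl)⟩)
  · have h1 : monomialOf (pack m) (rho m) (gam m) (x, y) = 0 :=
      monomialOf_apply_eq_zero (a := pack m)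
        (Or.inl fun s hs => hx (by rw [← hs]; exact rho_mem m s))
    rw [h1]
    by_contra h
    exact hx (mem_rset_iff.mpr ⟨y, fun h0 => h (h0 ▸ rfl)⟩)

/-- Total weight of an `ℕ₀`-matrix. -/
noncomputable def wt (a : NMat) : ℕ := ∑ s : Fin a.rows, ∑ t : Fin a.cols, a.entry s t

noncomputable def mdegHom : Mon →+ ℕ where
  toFun := mdeg
  map_zero' := by simp [mdeg]
  map_add' := by
    intro m n
    show (m + n).sum (fun _ e => e) = m.sum (fun _ e => e) + n.sum (fun _ e => e)
    exact Finsupp.sum_add_index' (fun _ => rfl) (fun _ _ _ => rfl)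

theorem mdegHom_apply (m : Mon) : mdegHom m = mdeg m := rfl

theorem mdeg_single (p : ℕ × ℕ) (e : ℕ) : mdegHom (Finsupp.single p e) = e := by
  show (Finsupp.single p e).sum (fun _ e => e) = e
  exact Finsupp.sum_single_index rfl

theorem mdeg_monomialOf (a : NMat) (ι : Fin a.rows → ℕ) (κ : Fin a.cols → ℕ) :
    mdeg (monomialOf a ι κ) = wt a := by
  rw [← mdegHom_apply]
  unfold monomialOf wt
  rw [map_sum]
  refine Finset.sum_congr rfl fun s _ => ?_
  rw [map_sum]
  refine Finset.sum_congr rfl fun t _ => ?_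
  exact mdeg_single _ _

theorem rows_le_wt {a : NMat} (ha : a.IsComp) : a.rows ≤ wt a := by
  have h1 : ∀ s : Fin a.rows, 1 ≤ ∑ t : Fin a.cols, a.entry ↑s ↑t := by
    intro s
    obtain ⟨j, hj, hj0⟩ := ha.1 s s.isLt
    have h2 : a.entry ↑s ↑(⟨j, hj⟩ : Fin a.cols) ≤ ∑ t : Fin a.cols, a.entry ↑s ↑t :=
      Finset.single_le_sum (f := fun t : Fin a.cols => a.entry ↑s ↑t)
        (fun _ _ => Nat.zero_le _) (Finset.mem_univ (⟨j, hj⟩ : Fin a.cols))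
    exact le_trans (Nat.one_le_iff_ne_zero.mpr hj0) h2
  calc a.rows = ∑ _s : Fin a.rows, 1 := by simp
    _ ≤ ∑ s : Fin a.rows, ∑ t : Fin a.cols, a.entry ↑s ↑t :=
        Finset.sum_le_sum fun s _ => h1 s
    _ = wt a := rfl

theorem cols_le_wt {a : NMat} (ha : a.IsComp) : a.cols ≤ wt a := by
  have h1 : ∀ t : Fin a.cols, 1 ≤ ∑ s : Fin a.rows, a.entry ↑s ↑t := by
    intro t
    obtain ⟨i, hi, hi0⟩ := ha.2 t t.isLt
    have h2 : a.entry ↑(⟨i, hi⟩ : Fin a.rows) ↑t ≤ ∑ s : Fin a.rows, a.entry ↑s ↑t :=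
      Finset.single_le_sum (f := fun s : Fin a.rows => a.entry ↑s ↑t)
        (fun _ _ => Nat.zero_le _) (Finset.mem_univ (⟨i, hi⟩ : Fin a.rows))
    exact le_trans (Nat.one_le_iff_ne_zero.mpr hi0) h2
  calc a.cols = ∑ _t : Fin a.cols, 1 := by simp
    _ ≤ ∑ t : Fin a.cols, ∑ s : Fin a.rows, a.entry ↑s ↑t :=
        Finset.sum_le_sum fun t _ => h1 t
    _ = wt a := (Finset.sum_comm)

theorem entry_le_wt (a : NMat) (i j : ℕ) : a.entry i j ≤ wt a := by
  by_cases h : i < a.rows ∧ j < a.cols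
  · have h2 : a.entry i j ≤ ∑ t : Fin a.cols, a.entry ↑(⟨i, h.1⟩ : Fin a.rows) ↑t :=
      Finset.single_le_sum (f := fun t : Fin a.cols => a.entry ↑(⟨i, h.1⟩ : Fin a.rows) ↑t)
        (fun _ _ => Nat.zero_le _) (Finset.mem_univ (⟨j, h.2⟩ : Fin a.cols))
    have h3 : (∑ t : Fin a.cols, a.entry ↑(⟨i, h.1⟩ : Fin a.rows) ↑t) ≤ wt a :=
      Finset.single_le_sum (f := fun s : Fin a.rows => ∑ t : Fin a.cols, a.entry ↑s ↑t)
        (fun _ _ => Nat.zero_le _) (Finset.mem_univ (⟨i, h.1⟩ : Fin a.rows))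
    exact le_trans h2 h3
  · rw [a.entry_eq_zero i j (by omega)]
    exact Nat.zero_le _

/-- Bounded box of matrices. -/
def nbox (D : ℕ) : Set NMat := {a | a.rows ≤ D ∧ a.cols ≤ D ∧ ∀ i j, a.entry i j ≤ D}

noncomputable def ndecode (D : ℕ) :
    Fin (D + 1) × Fin (D + 1) × (Fin D → Fin D → Fin (D + 1)) → NMat :=
  fun x =>
    { rows := x.1
      cols := x.2.1
      entry := fun i j =>
        if h : i < (x.1 : ℕ) ∧ j < (x.2.1 : ℕ) then
          (x.2.2 ⟨i, lt_of_lt_of_le h.1 (Nat.lt_succ_iff.mp x.1.isLt)⟩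
            ⟨j, lt_of_lt_of_le h.2 (Nat.lt_succ_iff.mp x.2.1.isLt)⟩ : ℕ)
        else 0
      entry_eq_zero := by
        intro i j h
        rw [dif_neg]
        omega }

theorem nbox_finite (D : ℕ) : (nbox D).Finite := by
  apply Set.Finite.subset (Set.finite_range (ndecode D))
  rintro a ⟨h1, h2, h3⟩
  refine ⟨⟨⟨a.rows, by omega⟩, ⟨a.cols, by omega⟩,
    fun i j => ⟨a.entry i j, Nat.lt_succ_of_le (h3 i j)⟩⟩, ?_⟩
  refine NMat.ext2 rfl rfl fun i j => ?_
  show (if h : i < a.rows ∧ j < a.cols then a.entry i j else 0) = a.entry i j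
  by_cases h : i < a.rows ∧ j < a.cols
  · rw [dif_pos h]
  · rw [dif_neg h, a.entry_eq_zero i j (by omega)]

theorem val_strictMono' {n : ℕ} : StrictMono (fun s : Fin n => (s : ℕ)) :=
  fun _ _ h => h

/-- Monomial quasisymmetric functions evaluated on chain monomials. -/
theorem monQ_monomialOf {R : Type*} [CommRing R] {a b : NMat} (ha : a.IsComp) (hb : b.IsComp)
    {ι : Fin b.rows → ℕ} {κ : Fin b.cols → ℕ} (hι : StrictMono ι) (hκ : StrictMono κ) :
    monQ (R := R) a (monomialOf b ι κ) = if a = b then 1 else 0 := by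
  unfold monQ
  by_cases h : ∃ (ι' : Fin a.rows → ℕ) (κ' : Fin a.cols → ℕ),
      StrictMono ι' ∧ StrictMono κ' ∧ monomialOf b ι κ = monomialOf a ι' κ'
  · rw [if_pos h]
    obtain ⟨ι', κ', hι', hκ', heq⟩ := h
    have hab : a = b := by
      have h1 := pack_monomialOf hb hι hκ
      have h2 := pack_monomialOf ha hι' hκ'
      rw [heq] at h1
      rw [h2] at h1
      exact h1
    rw [if_pos hab]
  · rw [if_neg h, if_neg]
    intro hab
    subst hab
    exact h ⟨ι, κ, hι, hκ, rfl⟩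

theorem monQ_isQSym {R : Type*} [CommRing R] {a : NMat} (ha : a.IsComp) :
    IsQSym (monQ (R := R) a) := by
  constructor
  · refine ⟨wt a, fun m hm => ?_⟩
    unfold monQ at hm
    by_cases h : ∃ (ι : Fin a.rows → ℕ) (κ : Fin a.cols → ℕ),
        StrictMono ι ∧ StrictMono κ ∧ m = monomialOf a ι κ
    · obtain ⟨ι, κ, hι, hκ, rfl⟩ := h
      rw [mdeg_monomialOf]
    · rw [if_neg h] at hm
      exact absurd rfl hm
  · intro b hb ι κ hι hκ
    rw [monQ_monomialOf ha hb hι hκ, monQ_monomialOf ha hb val_strictMono' val_strictMono']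

end TwoParam
end Aux
open TwoParam in
/-- `QSym` is a free `R`-module with the monomial
quasisymmetric functions, indexed by `ℕ₀`-matrix compositions, as basis. -/
theorem statement16 (R : Type*) [CommRing R] [IsDomain R] :
    LinearIndependent R
        (fun a : {a : NMat // a.IsComp} => monQ (R := R) a.1) ∧
      Submodule.span R
          (Set.range fun a : {a : NMat // a.IsComp} => monQ (R := R) a.1) =
        QSymSub R := by
  constructor
  · rw [linearIndependent_iff]
    intro l hl
    ext b
    have h0 : (Finsupp.linearCombination R
        (fun a : {a : NMat // a.IsComp} => monQ (R := R) a.1) l)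
        (monomialOf b.1 (fun s => (s : ℕ)) (fun t => (t : ℕ))) = 0 := by
      rw [hl]; rfl
    rw [Finsupp.linearCombination_apply, Finsupp.sum, Finset.sum_apply] at h0
    have hterm : ∀ i ∈ l.support,
        (l i • monQ (R := R) i.1) (monomialOf b.1 (fun s => (s : ℕ)) (fun t => (t : ℕ))) =
          if i = b then l i else 0 := by
      intro i _
      rw [Pi.smul_apply, smul_eq_mul,
        monQ_monomialOf i.2 b.2 val_strictMono' val_strictMono']
      by_cases h : i = b
      · rw [if_pos h, if_pos (by rw [h]), mul_one]
      · rw [if_neg h, if_neg (fun h' => h (Subtype.ext h')), mul_zero]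
    by_cases hb : b ∈ l.support
    · rw [Finset.sum_congr rfl hterm,
        Finset.sum_eq_single_of_mem b hb (fun i _ hi => if_neg hi), if_pos rfl] at h0
      exact h0
    · exact Finsupp.notMem_support_iff.mp hb
  · apply le_antisymm
    · rw [Submodule.span_le]
      rintro _ ⟨a, rfl⟩
      exact monQ_isQSym a.2
    · intro f hf
      obtain ⟨⟨D, hD⟩, hsym⟩ := hf
      have hTfin : (Set.Finite ((Subtype.val : {a : NMat // a.IsComp} → NMat) ⁻¹' nbox D)) :=
        Set.Finite.preimage Subtype.val_injective.injOn (nbox_finite D)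
      set T : Finset {a : NMat // a.IsComp} := hTfin.toFinset with hT
      have hfeq : f = ∑ x ∈ T,
          f (monomialOf x.1 (fun s => (s : ℕ)) (fun t => (t : ℕ))) • monQ (R := R) x.1 := by
        funext m
        rw [Finset.sum_apply]
        have hm : monomialOf (pack m) (rho m) (gam m) = m := monomialOf_pack m
        have hterm : ∀ x ∈ T,
            (f (monomialOf x.1 (fun s => (s : ℕ)) (fun t => (t : ℕ))) • monQ (R := R) x.1) m =
              if x = (⟨pack m, pack_isComp m⟩ : {a : NMat // a.IsComp})
              then f (monomialOf x.1 (fun s => (s : ℕ)) (fun t => (t : ℕ))) else 0 := by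
          intro x _
          rw [Pi.smul_apply, smul_eq_mul]
          have h2 : monQ (R := R) x.1 m = if x.1 = pack m then 1 else 0 := by
            conv_lhs => rw [← hm]
            exact monQ_monomialOf x.2 (pack_isComp m)
              (rho_strictMono m) (gam_strictMono m)
          rw [h2]
          by_cases h : x = (⟨pack m, pack_isComp m⟩ : {a : NMat // a.IsComp})
          · rw [if_pos h, if_pos (by rw [h]), mul_one]
          · rw [if_neg h, if_neg (fun h' => h (Subtype.ext h')), mul_zero]
        rw [Finset.sum_congr rfl hterm]
        have hwt : mdeg m = wt (pack m) := by
          conv_lhs => rw [← hm]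
          exact mdeg_monomialOf (pack m) (rho m) (gam m)
        by_cases hPT : (⟨pack m, pack_isComp m⟩ : {a : NMat // a.IsComp}) ∈ T
        · rw [Finset.sum_eq_single_of_mem _ hPT (fun x _ hx => if_neg hx), if_pos rfl]
          conv_lhs => rw [← hm]
          exact hsym (pack m) (pack_isComp m) (rho m) (gam m)
            (rho_strictMono m) (gam_strictMono m)
        · rw [Finset.sum_eq_zero fun x hx => if_neg
            (fun (h : x = (⟨pack m, pack_isComp m⟩ : {a : NMat // a.IsComp})) =>
              hPT (h ▸ hx))]
          have hnb : pack m ∉ nbox D := by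
            intro hmem
            exact hPT (by rw [hT, Set.Finite.mem_toFinset]; exact hmem)
          have hDlt : D < wt (pack m) := by
            unfold nbox at hnb
            simp only [Set.mem_setOf_eq, not_and_or] at hnb
            push_neg at hnb
            rcases hnb with h | h | h
            · exact lt_of_lt_of_le h (rows_le_wt (pack_isComp m))
            · exact lt_of_lt_of_le h (cols_le_wt (pack_isComp m))
            · obtain ⟨i, j, hij⟩ := h
              exact lt_of_lt_of_le hij (entry_le_wt (pack m) i j)
          by_contra hfm
          have := hD m hfm
          omega
      rw [hfeq]
      exact Submodule.sum_mem _ fun x _ =>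
        Submodule.smul_mem _ _ (Submodule.subset_span ⟨x, rfl⟩)
end
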